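/- arXiv:2205.08532 — 2 statements merged into one kernel-verified Lean document; each statement's English description precedes it below -/
import Mathlib

section
/- Let X ∼ N(0,Σ) on ℝ^d with Σ positive semidefinite, and let M := E[(X ⊗ X)(X ⊗ X)^⊤] ∈ ℝ^{d²×d²}. Then for every v ∈ ℝ^{d²}: v^⊤ M v = v^⊤ Σ^{⊗2} v + v^⊤ Σ^{⊗2} [((v^#)^⊤)^♭] + (v^⊤ Σ^♭)², where Σ^{⊗2} = Σ ⊗ Σ. -/
open MeasureTheory ProbabilityTheory Matrix Set
open scoped Kronecker

noncomputable section

instance {d : ℕ} : MeasurableSpace (Matrix (Fin d) (Fin d) ℝ) :=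
  inferInstanceAs (MeasurableSpace (Fin d → Fin d → ℝ))

/-- The standard Gaussian measure on `ℝ^d`. -/
def stdGaussian (d : ℕ) : Measure (Fin d → ℝ) :=
  Measure.pi fun _ : Fin d => gaussianReal 0 1

open Classical in
/-- The positive semidefinite square root of a positive semidefinite matrix
(junk value `0` if the matrix is not positive semidefinite). -/
def matSqrt {d : ℕ} (S : Matrix (Fin d) (Fin d) ℝ) : Matrix (Fin d) (Fin d) ℝ :=
  if h : S.PosSemidef then
    (h.1.eigenvectorUnitary : Matrix (Fin d) (Fin d) ℝ) *
      diagonal ((↑) ∘ (√·) ∘ h.1.eigenvalues) *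
      (star h.1.eigenvectorUnitary : Matrix (Fin d) (Fin d) ℝ)
  else 0

/-- The centered multivariate Gaussian measure `N(0, S)` on `ℝ^d`, realized as the
pushforward of the standard Gaussian under `x ↦ S^{1/2} x`. -/
def mvGaussian {d : ℕ} (S : Matrix (Fin d) (Fin d) ℝ) : Measure (Fin d → ℝ) :=
  Measure.map (fun x => (matSqrt S) *ᵥ x) (stdGaussian d)

section AuxGFM
open Real
open scoped NNReal ENNReal
namespace GFM


def J (n : ℕ) : ℝ := ∫ x : ℝ, x ^ n * Real.exp (-(2⁻¹ : ℝ) * x ^ 2)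

lemma integrable_J (n : ℕ) :
    Integrable (fun x : ℝ => x ^ n * Real.exp (-(2⁻¹ : ℝ) * x ^ 2)) := by
  have h := integrable_rpow_mul_exp_neg_mul_sq (b := (2⁻¹ : ℝ)) (by norm_num)
    (s := (n : ℝ)) ((by norm_num : (-1:ℝ) < 0).trans_le (Nat.cast_nonneg n))
  simpa [Real.rpow_natCast] using h

lemma deriv_aux (n : ℕ) (x : ℝ) :
    HasDerivAt (fun x : ℝ => x ^ (n+1) * Real.exp (-(2⁻¹ : ℝ) * x ^ 2))
      ((n+1 : ℝ) * x ^ n * Real.exp (-(2⁻¹ : ℝ) * x ^ 2)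
        - x ^ (n+2) * Real.exp (-(2⁻¹ : ℝ) * x ^ 2)) x := by
  have h1 : HasDerivAt (fun x : ℝ => x ^ (n+1)) ((n+1 : ℝ) * x ^ n) x := by
    simpa using hasDerivAt_pow (n+1) x
  have h2 : HasDerivAt (fun x : ℝ => Real.exp (-(2⁻¹ : ℝ) * x ^ 2))
      (Real.exp (-(2⁻¹ : ℝ) * x ^ 2) * (-(2⁻¹ : ℝ) * (2 * x))) x := by
    exact (((hasDerivAt_pow 2 x).const_mul (-(2⁻¹ : ℝ))).exp).congr_deriv (by ring_nf)
  have := h1.mul h2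
  exact this.congr_deriv (by ring)

lemma J_rec (n : ℕ) : J (n + 2) = (n + 1 : ℝ) * J n := by
  have hz := integral_eq_zero_of_hasDerivAt_of_integrable (deriv_aux n)
    ((((integrable_J n).const_mul ((n:ℝ)+1)).sub (integrable_J (n+2))).congr
      (Filter.Eventually.of_forall fun x => by simp [mul_assoc])) (integrable_J (n+1))
  simp only [mul_assoc] at hz
  rw [integral_sub ((integrable_J n).const_mul (((n:ℝ)+1))) (integrable_J (n+2)),
    integral_const_mul] at hz
  unfold J
  linarith

lemma J_zero : J 0 = Real.sqrt (2 * π) := by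
  unfold J
  simp only [pow_zero, one_mul]
  rw [show (-(2⁻¹:ℝ)) = -(2⁻¹:ℝ) from rfl]
  rw [show (∫ x : ℝ, Real.exp (-(2⁻¹:ℝ) * x ^ 2)) = Real.sqrt (π / 2⁻¹) from integral_gaussian 2⁻¹]
  norm_num [mul_comm]

lemma J_one : J 1 = 0 := by
  have hd : ∀ x : ℝ, HasDerivAt (fun x : ℝ => -Real.exp (-(2⁻¹ : ℝ) * x ^ 2))
      (x ^ 1 * Real.exp (-(2⁻¹ : ℝ) * x ^ 2)) x := by
    intro x
    have h2 : HasDerivAt (fun x : ℝ => Real.exp (-(2⁻¹ : ℝ) * x ^ 2))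
        (Real.exp (-(2⁻¹ : ℝ) * x ^ 2) * (-(2⁻¹ : ℝ) * (2 * x))) x :=
      (((hasDerivAt_pow 2 x).const_mul (-(2⁻¹ : ℝ))).exp).congr_deriv (by ring_nf)
    exact h2.neg.congr_deriv (by ring)
  exact integral_eq_zero_of_hasDerivAt_of_integrable hd (integrable_J 1)
    ((integrable_J 0).neg.congr (Filter.Eventually.of_forall fun x => by simp))


lemma gauss_density_eq :
    gaussianReal 0 1 = volume.withDensity
      (fun x => ((gaussianPDFReal 0 1 x).toNNReal : ℝ≥0∞)) := by
  rw [gaussianReal_of_var_ne_zero _ one_ne_zero]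
  rfl

lemma pdf_eq (x : ℝ) :
    gaussianPDFReal 0 1 x = (Real.sqrt (2 * π))⁻¹ * Real.exp (-(2⁻¹ : ℝ) * x ^ 2) := by
  unfold gaussianPDFReal
  simp only [NNReal.coe_one, mul_one, sub_zero]
  congr 1
  ring

lemma integral_gauss1 (g : ℝ → ℝ) :
    ∫ x, g x ∂(gaussianReal 0 1) = ∫ x, gaussianPDFReal 0 1 x * g x := by
  rw [gauss_density_eq,
    integral_withDensity_eq_integral_smul (measurable_gaussianPDFReal 0 1).real_toNNReal]
  congr 1
  funext x
  rw [NNReal.smul_def, Real.coe_toNNReal _ (gaussianPDFReal_nonneg 0 1 x), smul_eq_mul]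

lemma integrable_gauss1 {g : ℝ → ℝ}
    (h : Integrable (fun x => gaussianPDFReal 0 1 x * g x)) :
    Integrable g (gaussianReal 0 1) := by
  rw [gauss_density_eq,
    integrable_withDensity_iff_integrable_smul (measurable_gaussianPDFReal 0 1).real_toNNReal]
  refine h.congr (Filter.Eventually.of_forall fun x => ?_)
  show gaussianPDFReal 0 1 x * g x = (gaussianPDFReal 0 1 x).toNNReal • g x
  rw [NNReal.smul_def, Real.coe_toNNReal _ (gaussianPDFReal_nonneg 0 1 x), smul_eq_mul]

def mom (n : ℕ) : ℝ := ∫ x, x ^ n ∂(gaussianReal 0 1)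

lemma integrable_mom (n : ℕ) : Integrable (fun x : ℝ => x ^ n) (gaussianReal 0 1) := by
  refine integrable_gauss1 ?_
  have := (integrable_J n).const_mul (Real.sqrt (2 * π))⁻¹
  refine this.congr (Filter.Eventually.of_forall fun x => ?_)
  show (Real.sqrt (2*π))⁻¹ * (x ^ n * Real.exp (-(2⁻¹:ℝ) * x^2)) = gaussianPDFReal 0 1 x * x ^ n
  rw [pdf_eq]
  ring

lemma mom_eq (n : ℕ) : mom n = (Real.sqrt (2 * π))⁻¹ * J n := by
  unfold mom
  rw [integral_gauss1]
  simp_rw [pdf_eq]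
  have : (fun x : ℝ => (Real.sqrt (2 * π))⁻¹ * Real.exp (-(2⁻¹:ℝ) * x ^ 2) * x ^ n)
      = fun x : ℝ => (Real.sqrt (2 * π))⁻¹ * (x ^ n * Real.exp (-(2⁻¹:ℝ) * x ^ 2)) := by
    funext x; ring
  rw [this, integral_const_mul]
  rfl

lemma mom_zero : mom 0 = 1 := by
  unfold mom
  simp

lemma sqrt_ne : (Real.sqrt (2 * π))⁻¹ * J 0 = 1 := by
  rw [← mom_eq, mom_zero]

lemma mom_one : mom 1 = 0 := by rw [mom_eq, J_one, mul_zero]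

lemma mom_two : mom 2 = 1 := by
  rw [mom_eq, show (2 : ℕ) = 0 + 2 from rfl, J_rec]
  simpa using sqrt_ne

lemma mom_three : mom 3 = 0 := by
  rw [mom_eq, show (3 : ℕ) = 1 + 2 from rfl, J_rec, J_one]
  simp

lemma mom_four : mom 4 = 3 := by
  rw [mom_eq, show (4 : ℕ) = 2 + 2 from rfl, J_rec, show J 2 = J (0 + 2) from rfl, J_rec]
  have := sqrt_ne
  push_cast
  nlinarith [sqrt_ne]



lemma integral_std_prod {d : ℕ} (f : Fin d → ℝ → ℝ) :
    ∫ x, ∏ i, f i (x i) ∂(stdGaussian d) = ∏ i, ∫ x, f i x ∂(gaussianReal 0 1) := by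
  letI : MeasureSpace ℝ := ⟨gaussianReal 0 1⟩
  haveI : SigmaFinite (volume : Measure ℝ) := inferInstanceAs (SigmaFinite (gaussianReal 0 1))
  exact MeasureTheory.integral_fintype_prod_eq_prod f

lemma integrable_std_prod {d : ℕ} (f : Fin d → ℝ → ℝ)
    (hf : ∀ i, Integrable (f i) (gaussianReal 0 1)) :
    Integrable (fun x : Fin d → ℝ => ∏ i, f i (x i)) (stdGaussian d) := by
  letI : MeasureSpace ℝ := ⟨gaussianReal 0 1⟩
  haveI : SigmaFinite (volume : Measure ℝ) := inferInstanceAs (SigmaFinite (gaussianReal 0 1))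
  exact MeasureTheory.Integrable.fintype_prod (f := f) hf


def cnt {d : ℕ} (i j k l : Fin d) (m : Fin d) : ℕ :=
  (if m = i then 1 else 0) + (if m = j then 1 else 0)
    + (if m = k then 1 else 0) + (if m = l then 1 else 0)

lemma key_prod {d : ℕ} (i j k l : Fin d) (u : Fin d → ℝ) :
    ∏ m, u m ^ (cnt i j k l m) = u i * u j * u k * u l := by
  simp only [cnt, pow_add, Finset.prod_mul_distrib, pow_ite, pow_one, pow_zero,
    Finset.prod_ite_eq', Finset.mem_univ, if_true]

lemma integrable_four {d : ℕ} (i j k l : Fin d) :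
    Integrable (fun u : Fin d → ℝ => u i * u j * u k * u l) (stdGaussian d) := by
  have := integrable_std_prod (fun m x => x ^ cnt i j k l m) (fun m => integrable_mom _)
  exact this.congr (Filter.Eventually.of_forall fun u => key_prod i j k l u)

lemma prod_mom_single {d : ℕ} (a : Fin d) (f : Fin d → ℕ) (ha : f a = 4)
    (h0 : ∀ m, m ≠ a → f m = 0) : ∏ m, mom (f m) = 3 := by
  rw [Finset.prod_eq_single a (fun m _ hm => by rw [h0 m hm, mom_zero]) (by simp)]
  rw [ha, mom_four]

lemma prod_mom_pair {d : ℕ} {a b : Fin d} (f : Fin d → ℕ)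
    (ha : f a = 2) (hb : f b = 2) (h0 : ∀ m, m ≠ a → m ≠ b → f m = 0) :
    ∏ m, mom (f m) = 1 := by
  rw [Finset.prod_eq_one]
  intro m _
  by_cases h1 : m = a
  · rw [h1, ha, mom_two]
  by_cases h2 : m = b
  · rw [h2, hb, mom_two]
  · rw [h0 m h1 h2, mom_zero]

lemma prod_mom_zero {d : ℕ} (a : Fin d) (f : Fin d → ℕ) (ha : f a = 1 ∨ f a = 3) :
    ∏ m, mom (f m) = 0 := by
  refine Finset.prod_eq_zero (Finset.mem_univ a) ?_
  rcases ha with h | h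
  · rw [h, mom_one]
  · rw [h, mom_three]

lemma std_fourth {d : ℕ} (i j k l : Fin d) :
    ∫ u, u i * u j * u k * u l ∂(stdGaussian d)
      = (if i = j then (1:ℝ) else 0) * (if k = l then (1:ℝ) else 0)
        + (if i = k then (1:ℝ) else 0) * (if j = l then (1:ℝ) else 0)
        + (if i = l then (1:ℝ) else 0) * (if j = k then (1:ℝ) else 0) := by
  have h1 : ∫ u, u i * u j * u k * u l ∂(stdGaussian d) = ∏ m, mom (cnt i j k l m) := by
    calc ∫ u, u i * u j * u k * u l ∂(stdGaussian d)
        = ∫ u, ∏ m, (u m) ^ cnt i j k l m ∂(stdGaussian d) := by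
          congr 1; funext u; rw [key_prod]
      _ = ∏ m, ∫ x, x ^ cnt i j k l m ∂(gaussianReal 0 1) :=
          integral_std_prod (fun m x => x ^ cnt i j k l m)
      _ = ∏ m, mom (cnt i j k l m) := rfl
  rw [h1]
  by_cases hij : i = j
  · subst hij
    by_cases hkl : k = l
    · subst hkl
      by_cases hik : i = k
      · subst hik
        rw [prod_mom_single i _ (by simp [cnt]) (fun m hm => by simp [cnt, hm])]
        norm_num
      · rw [prod_mom_pair (a := i) (b := k) _ (by simp [cnt, hik])
          (by simp [cnt, Ne.symm hik]) (fun m h1 h2 => by simp [cnt, h1, h2])]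
        norm_num [hik]
    · by_cases hik : i = k
      · subst hik
        rw [prod_mom_zero l _ (Or.inl (by simp [cnt, Ne.symm hkl]))]
        simp [hkl]
      · rw [prod_mom_zero k _ (Or.inl (by simp [cnt, Ne.symm hik, hkl]))]
        simp [hkl, hik]
  · by_cases hkl : k = l
    · subst hkl
      by_cases hik : i = k
      · subst hik
        rw [prod_mom_zero j _ (Or.inl (by simp [cnt, Ne.symm hij]))]
        simp [hij, Ne.symm hij]
      · rw [prod_mom_zero i _ (Or.inl (by simp [cnt, hij, hik]))]
        simp [hij, hik]
    · by_cases hik : i = k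
      · subst hik
        by_cases hjl : j = l
        · subst hjl
          rw [prod_mom_pair (a := i) (b := j) _ (by simp [cnt, hij])
            (by simp [cnt, Ne.symm hij]) (fun m h1 h2 => by simp [cnt, h1, h2])]
          norm_num [hij]
        · rw [prod_mom_zero j _ (Or.inl (by simp [cnt, Ne.symm hij, hjl]))]
          simp [hij, hjl, Ne.symm hij]
      · by_cases hil : i = l
        · subst hil
          by_cases hjk : j = k
          · subst hjk
            rw [prod_mom_pair (a := i) (b := j) _ (by simp [cnt, hij])
              (by simp [cnt, Ne.symm hij]) (fun m h1 h2 => by simp [cnt, h1, h2])]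
            norm_num [hij, Ne.symm hij]
          · rw [prod_mom_zero j _ (Or.inl (by simp [cnt, Ne.symm hij, hjk]))]
            simp [hij, hik, hjk, Ne.symm hij]
        · rw [prod_mom_zero i _ (Or.inl (by simp [cnt, hij, hik, hil]))]
          simp [hij, hik, hil]


lemma sum4_expand {d : ℕ} (f g h k : Fin d → ℝ) :
    ((∑ i, f i) * (∑ j, g j)) * ((∑ i, h i) * (∑ j, k j))
      = ∑ t : (Fin d × Fin d) × Fin d × Fin d, (f t.1.1 * g t.1.2) * (h t.2.1 * k t.2.2) := by
  simp only [Fintype.sum_prod_type, Finset.sum_mul_sum]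
  rw [Finset.sum_congr rfl fun i _ => Finset.sum_comm]


lemma M_entry {d : ℕ} (S : Matrix (Fin d) (Fin d) ℝ) (hS : S.PosSemidef) (p q : Fin d × Fin d) :
    ∫ x, (x p.1 * x p.2) * (x q.1 * x q.2) ∂(mvGaussian S)
      = S p.1 p.2 * S q.1 q.2 + S p.1 q.1 * S p.2 q.2 + S p.1 q.2 * S p.2 q.1 := by
  set A := matSqrt S with hA
  have hAdef : A = (hS.1.eigenvectorUnitary : Matrix (Fin d) (Fin d) ℝ) *
      diagonal ((↑) ∘ (√·) ∘ hS.1.eigenvalues) *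
      (star hS.1.eigenvectorUnitary : Matrix (Fin d) (Fin d) ℝ) := dif_pos hS
  have hH : Aᴴ = A := by
    rw [hAdef, conjTranspose_mul, conjTranspose_mul, star_eq_conjTranspose,
      conjTranspose_conjTranspose, diagonal_conjTranspose, mul_assoc]
    simp
  have hsymm : ∀ a b, A a b = A b a := by
    intro a b
    have := congrFun (congrFun hH b) a
    simpa using this
  have hAA : A * A = S := by
    have hUU : (star hS.1.eigenvectorUnitary : Matrix (Fin d) (Fin d) ℝ) *
        (hS.1.eigenvectorUnitary : Matrix (Fin d) (Fin d) ℝ) = 1 := Unitary.coe_star_mul_self _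
    have hsp := hS.1.spectral_theorem
    rw [Unitary.conjStarAlgAut_apply] at hsp
    rw [hAdef]
    calc (hS.1.eigenvectorUnitary : Matrix (Fin d) (Fin d) ℝ) *
          diagonal ((↑) ∘ (√·) ∘ hS.1.eigenvalues) *
          (star hS.1.eigenvectorUnitary : Matrix (Fin d) (Fin d) ℝ) *
          ((hS.1.eigenvectorUnitary : Matrix (Fin d) (Fin d) ℝ) *
          diagonal ((↑) ∘ (√·) ∘ hS.1.eigenvalues) *
          (star hS.1.eigenvectorUnitary : Matrix (Fin d) (Fin d) ℝ))
        = (hS.1.eigenvectorUnitary : Matrix (Fin d) (Fin d) ℝ) *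
          (diagonal ((↑) ∘ (√·) ∘ hS.1.eigenvalues) *
          ((star hS.1.eigenvectorUnitary : Matrix (Fin d) (Fin d) ℝ) *
            (hS.1.eigenvectorUnitary : Matrix (Fin d) (Fin d) ℝ)) *
          diagonal ((↑) ∘ (√·) ∘ hS.1.eigenvalues)) *
          (star hS.1.eigenvectorUnitary : Matrix (Fin d) (Fin d) ℝ) := by
          simp only [Matrix.mul_assoc]
      _ = S := by
          rw [hUU, Matrix.mul_one, diagonal_mul_diagonal]
          conv_rhs => rw [hsp]
          congr 2
          refine congrArg diagonal (funext fun i => ?_)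
          simp [Real.mul_self_sqrt (hS.eigenvalues_nonneg i)]
  have hAS : ∀ a b, ∑ i, A a i * A b i = S a b := by
    intro a b
    have h2 : (A * A) a b = S a b := by rw [hAA]
    rw [mul_apply] at h2
    rw [← h2]
    exact Finset.sum_congr rfl fun i _ => by rw [hsymm b i]
  have hmeas : Measurable (fun x : Fin d → ℝ => A *ᵥ x) := by
    apply measurable_pi_lambda
    intro a
    simp only [mulVec, dotProduct]
    exact Finset.measurable_sum _ fun i _ => (measurable_pi_apply i).const_mul _
  have hf : Measurable (fun x : Fin d → ℝ => (x p.1 * x p.2) * (x q.1 * x q.2)) :=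
    ((measurable_pi_apply p.1).mul (measurable_pi_apply p.2)).mul
      ((measurable_pi_apply q.1).mul (measurable_pi_apply q.2))
  rw [mvGaussian, integral_map hmeas.aemeasurable hf.aestronglyMeasurable]
  have expand : ∀ u : Fin d → ℝ,
      ((A *ᵥ u) p.1 * (A *ᵥ u) p.2) * ((A *ᵥ u) q.1 * (A *ᵥ u) q.2)
      = ∑ t : (Fin d × Fin d) × Fin d × Fin d,
          (A p.1 t.1.1 * A p.2 t.1.2 * (A q.1 t.2.1 * A q.2 t.2.2))
            * (u t.1.1 * u t.1.2 * u t.2.1 * u t.2.2) := by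
    intro u
    have h := sum4_expand (fun i => A p.1 i * u i) (fun j => A p.2 j * u j)
      (fun i => A q.1 i * u i) (fun j => A q.2 j * u j)
    simp only [mulVec, dotProduct]
    rw [h]
    exact Finset.sum_congr rfl fun t _ => by ring
  simp_rw [expand]
  rw [integral_finset_sum _
    (fun t _ => (integrable_four t.1.1 t.1.2 t.2.1 t.2.2).const_mul _)]
  simp_rw [integral_const_mul, std_fourth]
  simp only [mul_add, Finset.sum_add_distrib, Fintype.sum_prod_type, mul_ite, ite_mul,
    mul_zero, zero_mul, mul_one, one_mul, Finset.sum_ite_eq, Finset.sum_ite_eq',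
    Finset.mem_univ, if_true, Finset.sum_ite_irrel, Finset.sum_const_zero]
  have h1 : ∑ x : Fin d, ∑ y : Fin d, A p.1 x * A p.2 x * (A q.1 y * A q.2 y)
      = S p.1 p.2 * S q.1 q.2 := by
    rw [← hAS p.1 p.2, ← hAS q.1 q.2, Finset.sum_mul_sum]
    all_goals exact Finset.sum_congr rfl fun x _ => Finset.sum_congr rfl fun y _ => by ring
  have h2 : ∑ x : Fin d, ∑ y : Fin d, A p.1 x * A p.2 y * (A q.1 x * A q.2 y)
      = S p.1 q.1 * S p.2 q.2 := by
    rw [← hAS p.1 q.1, ← hAS p.2 q.2, Finset.sum_mul_sum]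
    all_goals exact Finset.sum_congr rfl fun x _ => Finset.sum_congr rfl fun y _ => by ring
  have h3 : ∑ x : Fin d, ∑ y : Fin d, A p.1 x * A p.2 y * (A q.1 y * A q.2 x)
      = S p.1 q.2 * S p.2 q.1 := by
    rw [← hAS p.1 q.2, ← hAS p.2 q.1, Finset.sum_mul_sum]
    all_goals exact Finset.sum_congr rfl fun x _ => Finset.sum_congr rfl fun y _ => by ring
  rw [h1, h2, h3]

end GFM
end AuxGFM

/-- **Fourth-moment identity for centered Gaussians.**
For `X ∼ N(0, Σ)` with `Σ` positive semidefinite and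
`M = E[(X ⊗ X)(X ⊗ X)^⊤]`, every `v ∈ ℝ^{d²}` satisfies
`v^⊤Mv = v^⊤Σ^{⊗2}v + v^⊤Σ^{⊗2}((v^#)^⊤)^♭ + (v^⊤Σ^♭)²`. -/
theorem gaussian_fourth_moment_bilinear
    {d : ℕ} (S : Matrix (Fin d) (Fin d) ℝ) (hS : S.PosSemidef)
    (v : Fin d × Fin d → ℝ) :
    v ⬝ᵥ ((Matrix.of fun p q : Fin d × Fin d =>
        ∫ x, (x p.1 * x p.2) * (x q.1 * x q.2) ∂(mvGaussian S)) *ᵥ v)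
      = v ⬝ᵥ ((S ⊗ₖ S) *ᵥ v)
        + v ⬝ᵥ ((S ⊗ₖ S) *ᵥ (fun p => v (p.2, p.1)))
        + (v ⬝ᵥ (fun p => S p.1 p.2)) ^ 2 := by
  have hMeq : (Matrix.of fun p q : Fin d × Fin d =>
      ∫ x, (x p.1 * x p.2) * (x q.1 * x q.2) ∂(mvGaussian S))
      = Matrix.of fun p q : Fin d × Fin d =>
          S p.1 p.2 * S q.1 q.2 + S p.1 q.1 * S p.2 q.2 + S p.1 q.2 * S p.2 q.1 := by
    ext p q
    exact GFM.M_entry S hS p q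
  rw [hMeq]
  simp only [dotProduct, mulVec, Matrix.of_apply, kroneckerMap_apply]
  have hswap : ∀ p : Fin d × Fin d,
      ∑ q : Fin d × Fin d, S p.1 q.1 * S p.2 q.2 * v (q.2, q.1)
        = ∑ q : Fin d × Fin d, S p.1 q.2 * S p.2 q.1 * v q := by
    intro p
    exact Fintype.sum_equiv (Equiv.prodComm (Fin d) (Fin d)) _ _ (fun q => rfl)
  have hsq : (∑ p : Fin d × Fin d, v p * S p.1 p.2) ^ 2
      = ∑ p : Fin d × Fin d, v p * ∑ q : Fin d × Fin d, (v q * S q.1 q.2) * S p.1 p.2 := by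
    rw [sq, Finset.sum_mul_sum]
    refine Finset.sum_congr rfl fun p _ => ?_
    rw [Finset.mul_sum]
    exact Finset.sum_congr rfl fun q _ => by ring
  rw [hsq]
  simp only [hswap]
  rw [← Finset.sum_add_distrib, ← Finset.sum_add_distrib]
  refine Finset.sum_congr rfl fun p _ => ?_
  simp only [Finset.mul_sum]
  rw [← Finset.sum_add_distrib, ← Finset.sum_add_distrib]
  exact Finset.sum_congr rfl fun q _ => by ring
end
end

section
/- Let μ ∈ ℝ^d and X ∼ N(μ, I_d). For every τ ≥ 2d: ∫_τ^∞ P( ‖X − μ‖₂ > t/(2√d) ) dt ≤ √(2πd) · exp( −(√(τ² − 2d²) − √2·d)² / (8d) ). -/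
open MeasureTheory ProbabilityTheory Set
open scoped Real ENNReal NNReal

noncomputable section

lemma aux_pdf_mul {lam : ℝ} (y : ℝ) :
    Real.exp (lam * y ^ 2) * ((gaussianPDF 0 1 y).toReal)
      = (Real.sqrt (2 * π))⁻¹ * Real.exp (-(1/2 - lam) * y ^ 2) := by
  rw [gaussianPDF]
  rw [ENNReal.toReal_ofReal (gaussianPDFReal_nonneg _ _ _)]
  rw [gaussianPDFReal]
  push_cast
  rw [mul_one, mul_one, sub_zero, mul_comm, mul_assoc, ← Real.exp_add]
  ring_nf

lemma aux_gauss_exp_sq_integrable {lam : ℝ} (hlam : lam < 1/2) :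
    Integrable (fun y : ℝ => Real.exp (lam * y ^ 2)) (gaussianReal 0 1) := by
  rw [gaussianReal_of_var_ne_zero 0 one_ne_zero]
  rw [integrable_withDensity_iff (measurable_gaussianPDF 0 1)
    (Filter.Eventually.of_forall fun x => ENNReal.ofReal_lt_top)]
  have h : (fun y : ℝ => Real.exp (lam * y ^ 2) * ((gaussianPDF 0 1 y).toReal))
      = fun y => (Real.sqrt (2 * π))⁻¹ * Real.exp (-(1/2 - lam) * y ^ 2) := by
    funext y; exact aux_pdf_mul y
  rw [h]
  exact (integrable_exp_neg_mul_sq (by linarith)).const_mul _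

lemma aux_gauss_exp_sq_integral {lam : ℝ} (hlam : lam < 1/2) :
    ∫ y, Real.exp (lam * y ^ 2) ∂(gaussianReal 0 1) = (Real.sqrt (1 - 2 * lam))⁻¹ := by
  rw [gaussianReal_of_var_ne_zero 0 one_ne_zero]
  have hpdf : (gaussianPDF 0 1) = fun y => (((gaussianPDFReal 0 1 y).toNNReal : ℝ≥0) : ℝ≥0∞) :=
    rfl
  rw [hpdf, integral_withDensity_eq_integral_smul
    ((measurable_gaussianPDFReal 0 1).real_toNNReal)]
  have h : (fun y : ℝ => ((gaussianPDFReal 0 1 y).toNNReal : ℝ≥0) • Real.exp (lam * y ^ 2))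
      = fun y => (Real.sqrt (2 * π))⁻¹ * Real.exp (-(1/2 - lam) * y ^ 2) := by
    funext y
    rw [NNReal.smul_def, smul_eq_mul, Real.coe_toNNReal _ (gaussianPDFReal_nonneg _ _ _),
      mul_comm, ← aux_pdf_mul y, gaussianPDF, ENNReal.toReal_ofReal (gaussianPDFReal_nonneg _ _ _)]
  rw [h, integral_const_mul, integral_gaussian]
  have h2 : (0:ℝ) < 1 - 2 * lam := by linarith
  rw [show π / (1/2 - lam) = (2 * π) * (1 - 2*lam)⁻¹ by field_simp]
  rw [Real.sqrt_mul (by positivity) ((1-2*lam)⁻¹), Real.sqrt_mul (by positivity) π,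
    Real.sqrt_inv, ← mul_assoc, inv_mul_cancel₀ (by positivity), one_mul]

lemma aux_pi_gauss_exp (d : ℕ) {lam : ℝ} (hlam : lam < 1/2) :
    Integrable (fun x : Fin d → ℝ => Real.exp (lam * ∑ j, x j ^ 2))
      (Measure.pi fun _ : Fin d => gaussianReal 0 1) ∧
    ∫ x : Fin d → ℝ, Real.exp (lam * ∑ j, x j ^ 2)
        ∂(Measure.pi fun _ : Fin d => gaussianReal 0 1)
      = ((Real.sqrt (1 - 2 * lam))⁻¹) ^ d := by
  letI : MeasureSpace ℝ := ⟨gaussianReal 0 1⟩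
  haveI : SigmaFinite (volume : Measure ℝ) := by
    change SigmaFinite (gaussianReal 0 1); infer_instance
  have hvol : (Measure.pi fun _ : Fin d => gaussianReal 0 1)
      = (volume : Measure (Fin d → ℝ)) := rfl
  have hfun : (fun x : Fin d → ℝ => Real.exp (lam * ∑ j, x j ^ 2))
      = fun x => ∏ j, Real.exp (lam * x j ^ 2) := by
    funext x
    rw [← Real.exp_sum, Finset.mul_sum]
  rw [hvol, hfun]
  constructor
  · exact Integrable.fintype_prod (f := fun _ y => Real.exp (lam * y ^ 2))
      (fun _ => aux_gauss_exp_sq_integrable hlam)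
  · erw [integral_fintype_prod_eq_pow (ι := Fin d) (fun y : ℝ => Real.exp (lam * y ^ 2)) (μ := volume)]
    rw [show ∫ y : ℝ, Real.exp (lam * y ^ 2) = (Real.sqrt (1 - 2 * lam))⁻¹ from
      aux_gauss_exp_sq_integral hlam]
    simp

lemma aux_chernoff' {Ω : Type*} [MeasurableSpace Ω] (P : Measure Ω) [IsFiniteMeasure P]
    (X : Ω → ℝ) {lam a M : ℝ} (hlam0 : 0 ≤ lam)
    (hint : Integrable (fun x => Real.exp (lam * X x)) P)
    (hval : ∫ x, Real.exp (lam * X x) ∂P = M) :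
    (P {x | a ≤ X x}).toReal ≤ Real.exp (-lam * a) * M := by
  have h := measure_ge_le_exp_mul_mgf (μ := P) (X := X) (t := lam) a hlam0 hint
  rwa [mgf, hval] at h

lemma aux_log_ineq {v : ℝ} (hv : 1 ≤ v) : Real.log ((v^2+1)/2) ≤ v - 1 := by
  have h2 := Real.quadratic_le_exp_of_nonneg (x := v-1) (by linarith)
  have h : (v^2+1)/2 ≤ Real.exp (v-1) := by nlinarith
  calc Real.log ((v^2+1)/2) ≤ Real.log (Real.exp (v-1)) :=
        Real.log_le_log (by positivity) h
    _ = v - 1 := Real.log_exp _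

lemma aux_exponent_ineq {dr a : ℝ} (hd : 0 < dr) (ha : dr ≤ a) :
    -((a - dr)/2) + (dr/2) * Real.log (a/dr) ≤ -(Real.sqrt (2*a - dr) - Real.sqrt dr)^2 / 4 := by
  set v := Real.sqrt (2*a/dr - 1) with hv
  have harg : (1:ℝ) ≤ 2*a/dr - 1 := by
    have h2 : (2:ℝ) ≤ 2*a/dr := (le_div_iff₀ hd).2 (by linarith)
    linarith
  have hvsq : v^2 = 2*a/dr - 1 := Real.sq_sqrt (by linarith)
  have hv1 : 1 ≤ v := by
    nlinarith [Real.sqrt_nonneg (2*a/dr - 1)]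
  have hlog : Real.log (a/dr) ≤ v - 1 := by
    have h : (v^2+1)/2 = a/dr := by rw [hvsq]; ring
    rw [← h]; exact aux_log_ineq hv1
  have hid : Real.sqrt (2*a - dr) = Real.sqrt dr * v := by
    rw [hv, ← Real.sqrt_mul hd.le]
    congr 1
    field_simp
  have hsd : Real.sqrt dr ^ 2 = dr := Real.sq_sqrt hd.le
  have hsq : (Real.sqrt (2*a - dr) - Real.sqrt dr)^2 = 2*a - 2*dr*v := by
    rw [hid, show (Real.sqrt dr * v - Real.sqrt dr)^2 = Real.sqrt dr ^2 * (v-1)^2 by ring, hsd]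
    have h : dr * v^2 = 2*a - dr := by rw [hvsq]; field_simp
    nlinarith
  rw [hsq]
  nlinarith [mul_le_mul_of_nonneg_left hlog (by linarith : (0:ℝ) ≤ dr/2)]

lemma aux_chi_sq_tail {d : ℕ} (hd : 0 < d) {a : ℝ} (ha : (d:ℝ) ≤ a) :
    ((Measure.pi fun _ : Fin d => gaussianReal 0 1) {x | a ≤ ∑ j, x j ^ 2}).toReal
      ≤ Real.exp (-(Real.sqrt (2*a - d) - Real.sqrt d)^2 / 4) := by
  have hdr : (0:ℝ) < d := Nat.cast_pos.2 hd
  have ha0 : 0 < a := lt_of_lt_of_le hdr ha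
  set lam : ℝ := (a - d)/(2*a) with hlam_def
  have hlam0 : 0 ≤ lam := div_nonneg (by linarith) (by linarith)
  have hlam : lam < 1/2 := by
    rw [hlam_def, div_lt_div_iff₀ (by linarith) (by norm_num)]
    linarith
  haveI : IsProbabilityMeasure (Measure.pi fun _ : Fin d => gaussianReal 0 1) := by
    infer_instance
  obtain ⟨hint, hval⟩ := aux_pi_gauss_exp d hlam
  have hchern := aux_chernoff' (Measure.pi fun _ : Fin d => gaussianReal 0 1)
    (fun x => ∑ j, x j ^ 2) (a := a) hlam0 hint hval
  refine hchern.trans ?_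
  have h12 : 1 - 2 * lam = (a / d)⁻¹ := by
    rw [hlam_def]; field_simp; ring
  rw [h12, Real.sqrt_inv, inv_inv]
  have had : 0 < a / d := by positivity
  have hpow : Real.sqrt (a/d) ^ d = Real.exp ((d/2) * Real.log (a/d)) := by
    rw [Real.sqrt_eq_rpow, ← Real.rpow_natCast ((a/d) ^ (1/2 : ℝ)) d,
      ← Real.rpow_mul had.le, Real.rpow_def_of_pos had]
    ring_nf
  rw [hpow, ← Real.exp_add]
  apply Real.exp_le_exp.2
  have hlam_a : -lam * a = -((a - (d:ℝ))/2) := by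
    rw [hlam_def]; field_simp
  rw [hlam_a]
  exact aux_exponent_ineq hdr ha

lemma aux_gauss_tail {d : ℕ} (hd : 0 < d) (μ : Fin d → ℝ) {a : ℝ} (ha : (d:ℝ) ≤ a) :
    ((Measure.pi fun j : Fin d => gaussianReal (μ j) 1)
        {x | a ≤ ∑ j, (x j - μ j) ^ 2}).toReal
      ≤ Real.exp (-(Real.sqrt (2*a - d) - Real.sqrt d)^2 / 4) := by
  have hmp : MeasurePreserving (fun (x : Fin d → ℝ) j => x j + μ j)
      (Measure.pi fun _ : Fin d => gaussianReal 0 1)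
      (Measure.pi fun j : Fin d => gaussianReal (μ j) 1) := by
    refine measurePreserving_pi _ _ (f := fun j (y : ℝ) => y + μ j) fun i => ?_
    refine ⟨measurable_id.add_const _, ?_⟩
    have h := gaussianReal_map_add_const (μ := 0) (v := 1) (μ i)
    rwa [zero_add] at h
  have hms : MeasurableSet {x : Fin d → ℝ | a ≤ ∑ j, (x j - μ j) ^ 2} := by
    apply measurableSet_le measurable_const
    exact Finset.measurable_sum _ fun j _ => ((measurable_pi_apply j).sub_const _).pow_const 2
  rw [← hmp.measure_preimage hms.nullMeasurableSet]
  have hpre : (fun (x : Fin d → ℝ) j => x j + μ j) ⁻¹' {x | a ≤ ∑ j, (x j - μ j) ^ 2}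
      = {x : Fin d → ℝ | a ≤ ∑ j, x j ^ 2} := by
    ext x; simp
  rw [hpre]
  exact aux_chi_sq_tail hd ha

lemma aux_g_mono {dr τ t : ℝ} (hd : 0 < dr) (hτ : 2 * dr ≤ τ) (ht : τ ≤ t) :
    (Real.sqrt (τ^2 - 2*dr^2) - Real.sqrt 2 * dr)^2 + (t - τ)^2
      ≤ (Real.sqrt (t^2 - 2*dr^2) - Real.sqrt 2 * dr)^2 := by
  have hτ0 : 0 < τ := by linarith
  have ht0 : 0 < t := by linarith
  set A := Real.sqrt (t^2 - 2*dr^2) with hA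
  set B := Real.sqrt (τ^2 - 2*dr^2) with hB
  have hτsq : 2*dr^2 ≤ τ^2 := by nlinarith
  have htsq : 2*dr^2 ≤ t^2 := by nlinarith
  have hA2 : A^2 = t^2 - 2*dr^2 := Real.sq_sqrt (by linarith)
  have hB2 : B^2 = τ^2 - 2*dr^2 := Real.sq_sqrt (by linarith)
  have hA0 : 0 ≤ A := Real.sqrt_nonneg _
  have hB0 : 0 ≤ B := Real.sqrt_nonneg _
  have hAB : B ≤ A := Real.sqrt_le_sqrt (by nlinarith)
  have hs2 : Real.sqrt 2 ^ 2 = 2 := Real.sq_sqrt (by norm_num)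
  have hs20 : 0 ≤ Real.sqrt 2 := Real.sqrt_nonneg 2
  have hτB : τ ≤ Real.sqrt 2 * B := by
    have h1 : τ^2 ≤ 2 * B^2 := by nlinarith
    calc τ = Real.sqrt (τ^2) := (Real.sqrt_sq hτ0.le).symm
      _ ≤ Real.sqrt (2 * B^2) := Real.sqrt_le_sqrt h1
      _ = Real.sqrt 2 * B := by
          rw [Real.sqrt_mul (by norm_num), Real.sqrt_sq hB0]
  have htA : t ≤ Real.sqrt 2 * A := by
    have h1 : t^2 ≤ 2 * A^2 := by nlinarith
    calc t = Real.sqrt (t^2) := (Real.sqrt_sq ht0.le).symm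
      _ ≤ Real.sqrt (2 * A^2) := Real.sqrt_le_sqrt h1
      _ = Real.sqrt 2 * A := by
          rw [Real.sqrt_mul (by norm_num), Real.sqrt_sq hA0]
  have hmul : (Real.sqrt 2 * (A - B)) * (t + τ) ≤ (2*(t-τ)) * (t+τ) := by
    have hnn : 0 ≤ Real.sqrt 2 * (A - B) := mul_nonneg hs20 (by linarith)
    calc (Real.sqrt 2 * (A - B)) * (t + τ)
        ≤ (Real.sqrt 2 * (A - B)) * (Real.sqrt 2 * (A + B)) := by
          apply mul_le_mul_of_nonneg_left _ hnn
          linarith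
      _ = (2*(t-τ)) * (t+τ) := by nlinarith [hs2, hA2, hB2]
  have hkey : Real.sqrt 2 * (A - B) ≤ 2*(t-τ) :=
    le_of_mul_le_mul_right hmul (by linarith)
  nlinarith [mul_le_mul_of_nonneg_left hkey hd.le,
    mul_nonneg (sub_nonneg.2 ht) (sub_nonneg.2 hτ)]

lemma aux_shift_integral (c τ : ℝ) :
    ∫ t in Ioi τ, Real.exp (-c * (t - τ)^2) = ∫ t in Ioi (0:ℝ), Real.exp (-c * t^2) := by
  rw [← integral_indicator measurableSet_Ioi, ← integral_indicator measurableSet_Ioi]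
  have h : (Ioi τ).indicator (fun t => Real.exp (-c * (t - τ)^2))
      = fun t => (Ioi (0:ℝ)).indicator (fun s => Real.exp (-c * s^2)) (t - τ) := by
    funext t
    by_cases h : τ < t
    · rw [Set.indicator_of_mem (mem_Ioi.2 h),
        Set.indicator_of_mem (by simp [mem_Ioi]; linarith)]
    · rw [Set.indicator_of_notMem (by simpa using h),
        Set.indicator_of_notMem (by simp [mem_Ioi]; linarith)]
  rw [h, integral_sub_right_eq_self]

lemma aux_sqrt_id {dr t : ℝ} (hd : 0 < dr) (h : 2*dr ≤ t) :
    (Real.sqrt (2*(t^2/(4*dr)) - dr) - Real.sqrt dr)^2/4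
      = (Real.sqrt (t^2 - 2*dr^2) - Real.sqrt 2 * dr)^2/(8*dr) := by
  have htsq : 2*dr^2 ≤ t^2 := by nlinarith
  have h2dr : (0:ℝ) < 2*dr := by linarith
  have h1 : 2*(t^2/(4*dr)) - dr = (t^2 - 2*dr^2)/(2*dr) := by field_simp; ring
  have h2 : Real.sqrt ((t^2 - 2*dr^2)/(2*dr))
      = Real.sqrt (t^2 - 2*dr^2) / Real.sqrt (2*dr) := Real.sqrt_div (by linarith) _
  have h3 : Real.sqrt dr = Real.sqrt 2 * dr / Real.sqrt (2*dr) := by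
    rw [eq_div_iff (by positivity : Real.sqrt (2*dr) ≠ 0), ← Real.sqrt_mul hd.le,
      show dr*(2*dr) = 2*dr^2 by ring, Real.sqrt_mul (by norm_num : (0:ℝ) ≤ 2),
      Real.sqrt_sq hd.le]
  have h4 : Real.sqrt (2*dr) ^ 2 = 2*dr := Real.sq_sqrt h2dr.le
  rw [h1, h2, h3, div_sub_div_same, div_pow, h4, div_div]
  ring_nf

/-- **Chi-squared tail-integral bound.**
For `X ∼ N(μ, I_d)` and every `τ ≥ 2d`,
`∫_τ^∞ P(‖X − μ‖₂ > t/(2√d)) dt ≤ √(2πd)·exp(−(√(τ² − 2d²) − √2·d)²/(8d))`. -/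
theorem gaussian_norm_tail_integral_bound
    {d : ℕ} (μ : Fin d → ℝ) (τ : ℝ) (hτ : 2 * (d : ℝ) ≤ τ) :
    (∫ t in Ioi τ,
        ((Measure.pi fun j : Fin d => gaussianReal (μ j) 1)
          {x | t / (2 * Real.sqrt d) < Real.sqrt (∑ j, (x j - μ j) ^ 2)}).toReal)
      ≤ Real.sqrt (2 * Real.pi * d) *
          Real.exp (-(Real.sqrt (τ ^ 2 - 2 * (d : ℝ) ^ 2) - Real.sqrt 2 * d) ^ 2 / (8 * d)) := by
  rcases Nat.eq_zero_or_pos d with hd0 | hd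
  · subst hd0
    simp
  · have hdr : (0:ℝ) < (d:ℝ) := Nat.cast_pos.2 hd
    have hτ0 : 0 < τ := by linarith
    have hc : (0:ℝ) < 1/(8*(d:ℝ)) := by positivity
    haveI : IsProbabilityMeasure (Measure.pi fun j : Fin d => gaussianReal (μ j) 1) := by
      infer_instance
    set C : ℝ := Real.exp (-(Real.sqrt (τ^2 - 2*(d:ℝ)^2) - Real.sqrt 2 * d)^2 / (8*d)) with hC_def
    have hGeq : (fun t : ℝ => C * Real.exp (-(t-τ)^2/(8*(d:ℝ))))
        = fun t : ℝ => C * Real.exp (-(1/(8*(d:ℝ)))*(t-τ)^2) := by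
      funext s
      congr 1
      ring_nf
    have key : (∫ t in Ioi τ,
        ((Measure.pi fun j : Fin d => gaussianReal (μ j) 1)
          {x | t / (2 * Real.sqrt d) < Real.sqrt (∑ j, (x j - μ j) ^ 2)}).toReal)
        ≤ ∫ t in Ioi τ, C * Real.exp (-(t-τ)^2/(8*(d:ℝ))) := by
      apply integral_mono_of_nonneg
      · exact Filter.Eventually.of_forall fun t => ENNReal.toReal_nonneg
      · rw [hGeq]
        exact (((integrable_exp_neg_mul_sq hc).comp_sub_right τ).const_mul C).restrict
      · rw [Filter.EventuallyLE, ae_restrict_iff' measurableSet_Ioi]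
        refine Filter.Eventually.of_forall fun t ht => ?_
        have htτ : τ < t := ht
        have h2dt : 2*(d:ℝ) ≤ t := by linarith
        have had : (d:ℝ) ≤ t^2/(4*(d:ℝ)) := by
          rw [le_div_iff₀ (by positivity)]
          nlinarith
        have hsub : {x : Fin d → ℝ |
              t / (2 * Real.sqrt d) < Real.sqrt (∑ j, (x j - μ j) ^ 2)}
            ⊆ {x : Fin d → ℝ | t^2/(4*(d:ℝ)) ≤ ∑ j, (x j - μ j) ^ 2} := by
          intro x hx
          simp only [mem_setOf_eq] at *
          have hSsum : 0 ≤ ∑ j, (x j - μ j)^2 := Finset.sum_nonneg fun j _ => sq_nonneg _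
          have hs0 : 0 ≤ t/(2*Real.sqrt d) := div_nonneg (by linarith) (by positivity)
          have hlt : (t/(2*Real.sqrt d))^2 < Real.sqrt (∑ j, (x j - μ j)^2) ^ 2 :=
            pow_lt_pow_left₀ hx hs0 two_ne_zero
          rw [Real.sq_sqrt hSsum] at hlt
          have hs2 : (t/(2*Real.sqrt d))^2 = t^2/(4*(d:ℝ)) := by
            rw [div_pow, mul_pow, Real.sq_sqrt hdr.le]
            norm_num
          rw [hs2] at hlt
          exact hlt.le
        calc ((Measure.pi fun j : Fin d => gaussianReal (μ j) 1)
              {x | t / (2 * Real.sqrt d) < Real.sqrt (∑ j, (x j - μ j) ^ 2)}).toReal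
            ≤ ((Measure.pi fun j : Fin d => gaussianReal (μ j) 1)
              {x | t^2/(4*(d:ℝ)) ≤ ∑ j, (x j - μ j) ^ 2}).toReal :=
              ENNReal.toReal_mono (measure_ne_top _ _) (measure_mono hsub)
          _ ≤ Real.exp (-(Real.sqrt (2*(t^2/(4*(d:ℝ))) - d) - Real.sqrt d)^2 / 4) :=
              aux_gauss_tail hd μ had
          _ = Real.exp (-(Real.sqrt (t^2 - 2*(d:ℝ)^2) - Real.sqrt 2 * d)^2 / (8*(d:ℝ))) := by
              rw [neg_div, aux_sqrt_id hdr h2dt, ← neg_div]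
          _ ≤ C * Real.exp (-(t-τ)^2/(8*(d:ℝ))) := by
              rw [hC_def, ← Real.exp_add]
              apply Real.exp_le_exp.2
              have hg := aux_g_mono hdr hτ htτ.le
              rw [neg_div, neg_div, neg_div, ← neg_add, neg_le_neg_iff, ← add_div]
              exact (div_le_div_iff_of_pos_right (by positivity)).2 hg
    refine key.trans ?_
    rw [hGeq, integral_const_mul, aux_shift_integral, integral_gaussian_Ioi]
    rw [show π / (1/(8*(d:ℝ))) = 2^2*(2*π*(d:ℝ)) by field_simp; ring]
    rw [Real.sqrt_mul (by positivity) _, Real.sqrt_sq (by norm_num : (0:ℝ) ≤ 2)]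
    rw [hC_def]
    ring_nf
    rw [mul_comm]
end
end
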